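/- Let f be continuous with xf(x)>0 for x≠0, f asymptotic at 0 to an odd increasing C¹ function φ which is regularly varying at 0 of index β>1. Let F(x)=∫_x^1 du/f(u) and Φ(x)=∫_x^1 du/φ(u) for x>0. Then lim_{x→0⁺} Φ(x)/F(x)=1 and lim_{t→∞} Φ⁻¹(t)/F⁻¹(t)=1. -/

import Mathlib

set_option maxHeartbeats 1600000

open Real Filter MeasureTheory Set Topology

/-- If `f` (with `x f(x) > 0` for `x ≠ 0`) is asymptotic at 0 to an odd
increasing `C¹` function `φ`, regularly varying at 0 with index `β > 1`, then with
`F(x) = ∫_x^1 du/f(u)` and `Φ(x) = ∫_x^1 du/φ(u)` one has `Φ(x)/F(x) → 1` as `x → 0⁺`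
and `Φ⁻¹(t)/F⁻¹(t) → 1` as `t → ∞`. -/
theorem stmt2 (f φ : ℝ → ℝ) (β : ℝ) (hβ : 1 < β)
    (hfc : Continuous f) (hsign : ∀ x ≠ 0, 0 < x * f x)
    (hφodd : ∀ x, φ (-x) = -φ x) (hφmono : StrictMono φ) (hφC1 : ContDiff ℝ 1 φ)
    (hφrv : ∀ l : ℝ, 0 < l →
      Tendsto (fun x => φ (l * x) / φ x) (𝓝[>] 0) (𝓝 (l ^ β)))
    (hasym : Tendsto (fun x => f x / φ x) (𝓝[≠] 0) (𝓝 1))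
    (Finv Φinv : ℝ → ℝ)
    (hFinv_pos : ∀ᶠ t in atTop, 0 < Finv t)
    (hFinv : ∀ᶠ t in atTop, (∫ u in Finv t..1, 1 / f u) = t)
    (hFinv0 : Tendsto Finv atTop (𝓝 0))
    (hΦinv_pos : ∀ᶠ t in atTop, 0 < Φinv t)
    (hΦinv : ∀ᶠ t in atTop, (∫ u in Φinv t..1, 1 / φ u) = t)
    (hΦinv0 : Tendsto Φinv atTop (𝓝 0)) :
    Tendsto (fun x => (∫ u in x..1, 1 / φ u) / (∫ u in x..1, 1 / f u))
      (𝓝[>] 0) (𝓝 1) ∧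
    Tendsto (fun t => Φinv t / Finv t) atTop (𝓝 1) := by
  -- basic facts
  have hφ0 : φ 0 = 0 := by have := hφodd 0; simp at this; linarith
  have hφpos : ∀ x : ℝ, 0 < x → 0 < φ x := fun x hx => hφ0 ▸ hφmono hx
  have hφcont : Continuous φ := hφC1.continuous
  have hfpos : ∀ x : ℝ, 0 < x → 0 < f x := by
    intro x hx; have := hsign x hx.ne'; nlinarith
  have intφ : ∀ a b : ℝ, 0 < a → 0 < b →
      IntervalIntegrable (fun u => 1 / φ u) volume a b := by
    intro a b ha hb
    apply ContinuousOn.intervalIntegrable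
    apply ContinuousOn.div continuousOn_const (hφcont.continuousOn)
    intro u hu
    have : 0 < u := lt_of_lt_of_le (lt_min ha hb) hu.1
    exact (hφpos u this).ne'
  have intf : ∀ a b : ℝ, 0 < a → 0 < b →
      IntervalIntegrable (fun u => 1 / f u) volume a b := by
    intro a b ha hb
    apply ContinuousOn.intervalIntegrable
    apply ContinuousOn.div continuousOn_const (hfc.continuousOn)
    intro u hu
    have : 0 < u := lt_of_lt_of_le (lt_min ha hb) hu.1
    exact (hfpos u this).ne'
  obtain ⟨Φ, hΦdef⟩ : ∃ Φ : ℝ → ℝ, Φ = fun x => ∫ u in x..1, 1 / φ u := ⟨_, rfl⟩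
  obtain ⟨F, hFdef⟩ : ∃ F : ℝ → ℝ, F = fun x => ∫ u in x..1, 1 / f u := ⟨_, rfl⟩
  have hΦinv' : ∀ᶠ t in atTop, Φ (Φinv t) = t := by rw [hΦdef]; exact hΦinv
  have hFinv' : ∀ᶠ t in atTop, F (Finv t) = t := by rw [hFdef]; exact hFinv
  have Φadd : ∀ a b : ℝ, 0 < a → 0 < b →
      (∫ u in a..b, 1 / φ u) + Φ b = Φ a := by
    intro a b ha hb
    rw [hΦdef]
    exact intervalIntegral.integral_add_adjacent_intervals (intφ a b ha hb)
      (intφ b 1 hb one_pos)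
  have Fadd : ∀ a b : ℝ, 0 < a → 0 < b →
      (∫ u in a..b, 1 / f u) + F b = F a := by
    intro a b ha hb
    rw [hFdef]
    exact intervalIntegral.integral_add_adjacent_intervals (intf a b ha hb)
      (intf b 1 hb one_pos)
  have intnn : ∀ a b : ℝ, 0 < a → a ≤ b → 0 ≤ ∫ u in a..b, 1 / φ u := by
    intro a b ha hab
    refine intervalIntegral.integral_nonneg hab ?_
    intro u hu
    have hu0 : 0 < u := lt_of_lt_of_le ha hu.1
    have := hφpos u hu0; positivity
  have Φanti : ∀ a b : ℝ, 0 < a → a ≤ b → Φ b ≤ Φ a := by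
    intro a b ha hab
    have := Φadd a b ha (lt_of_lt_of_le ha hab)
    have h2 := intnn a b ha hab
    linarith
  have Φtop : Tendsto Φ (𝓝[>] 0) atTop := by
    rw [tendsto_atTop]
    intro M
    obtain ⟨t, ht⟩ := ((hΦinv_pos.and hΦinv').and (eventually_ge_atTop M)).exists
    have hmem : Ioc (0:ℝ) (Φinv t) ∈ 𝓝[>] (0:ℝ) := by
      rw [mem_nhdsGT_iff_exists_Ioc_subset]
      exact ⟨Φinv t, ht.1.1, subset_rfl⟩
    filter_upwards [eventually_mem_nhdsWithin (s := Ioi (0:ℝ)), hmem] with x hx hx2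
    calc M ≤ t := ht.2
    _ = Φ (Φinv t) := ht.1.2.symm
    _ ≤ Φ x := Φanti x (Φinv t) hx hx2.2
  -- Part 1 core
  have key : Tendsto (fun x => F x / Φ x) (𝓝[>] 0) (𝓝 1) := by
      have hsub : 𝓝[>] (0:ℝ) ≤ 𝓝[≠] (0:ℝ) :=
        nhdsWithin_mono 0 (fun x hx => ne_of_gt hx)
      have hdiff : Tendsto (fun x => (F x - Φ x) / Φ x) (𝓝[>] 0) (𝓝 0) := by
        rw [Metric.tendsto_nhds]
        intro ε hε
        set ε' : ℝ := min (ε/6) (1/2) with hε'def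
        have hε'pos : 0 < ε' := lt_min (by positivity) one_half_pos
        have hε'le : ε' ≤ ε/6 := min_le_left _ _
        have hε'half : ε' ≤ 1/2 := min_le_right _ _
        have h1 : ∀ᶠ x in 𝓝[>] (0:ℝ), |f x / φ x - 1| ≤ ε' := by
          have := (hasym.mono_left hsub)
          have h2 : ∀ᶠ y in 𝓝 (1:ℝ), |y - 1| ≤ ε' :=
            eventually_nhds_iff.mpr ⟨Metric.ball 1 ε', fun y hy => le_of_lt (by
              simpa [Real.dist_eq] using hy), Metric.isOpen_ball, by simpa using hε'pos⟩
          exact this.eventually h2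
        obtain ⟨δ, hδ0, hδ⟩ : ∃ δ > (0:ℝ), ∀ x ∈ Ioc (0:ℝ) δ, |f x / φ x - 1| ≤ ε' := by
          obtain ⟨δ, hδ0, hδ⟩ := mem_nhdsGT_iff_exists_Ioc_subset.mp h1
          exact ⟨δ, hδ0, fun x hx => hδ hx⟩
        set δ' : ℝ := min δ 1 with hδ'def
        have hδ'0 : 0 < δ' := lt_min hδ0 one_pos
        have hδ'1 : δ' ≤ 1 := min_le_right _ _
        -- pointwise bound
        have hpt : ∀ u : ℝ, 0 < u → u ≤ δ' → |1 / f u - 1 / φ u| ≤ 2 * ε' * (1 / φ u) := by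
          intro u hu huδ
          have hub : |f u / φ u - 1| ≤ ε' := hδ u ⟨hu, le_trans huδ (min_le_left _ _)⟩
          have hφu : 0 < φ u := hφpos u hu
          have hfu : 0 < f u := hfpos u hu
          have hr : f u = (f u / φ u) * φ u := (div_mul_cancel₀ _ hφu.ne').symm
          obtain ⟨hl, hr2⟩ := abs_le.mp hub
          have h3 : (1 - ε') * φ u ≤ f u := by rw [hr]; nlinarith
          have h5 : f u ≤ (1 + ε') * φ u := by rw [hr]; nlinarith
          have h4 : φ u / 2 ≤ f u := le_trans (by nlinarith) h3
          have he : 1 / f u - 1 / φ u = (φ u - f u) / (f u * φ u) := by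
            field_simp
          rw [he, abs_div, abs_of_pos (mul_pos hfu hφu),
            div_le_iff₀ (mul_pos hfu hφu)]
          have h6 : |φ u - f u| ≤ ε' * φ u := by
            rw [abs_le]; constructor <;> nlinarith
          have h7 : 2 * ε' * (1 / φ u) * (f u * φ u) = 2 * ε' * f u := by
            field_simp
          rw [h7]; nlinarith
        set Cδ : ℝ := |F δ' - Φ δ'| with hCdef
        have hev1 : ∀ᶠ x in 𝓝[>] (0:ℝ), x ≤ δ' := by
          filter_upwards [Ioo_mem_nhdsGT hδ'0] with x hx
          exact le_of_lt hx.2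
        have hev2 : ∀ᶠ x in 𝓝[>] (0:ℝ), Cδ + 1 ≤ (ε/2) * Φ x := by
          have : Tendsto (fun x => (ε/2) * Φ x) (𝓝[>] (0:ℝ)) atTop :=
            Φtop.const_mul_atTop (by positivity)
          exact this.eventually_ge_atTop _
        have hΦδ' : 0 ≤ Φ δ' := by rw [hΦdef]; exact intnn δ' 1 hδ'0 hδ'1
        filter_upwards [eventually_mem_nhdsWithin, hev1, hev2] with x hx0 hxδ hxC
        have hx : (0:ℝ) < x := hx0
        have hCnn : 0 ≤ Cδ := abs_nonneg _
        have hΦx : 0 < Φ x := by nlinarith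
        rw [Real.dist_eq, sub_zero, abs_div, abs_of_pos hΦx, div_lt_iff₀ hΦx]
        have e1 : F x - Φ x = (∫ u in x..δ', (1 / f u - 1 / φ u)) + (F δ' - Φ δ') := by
          have hF := Fadd x δ' hx hδ'0
          have hΦ := Φadd x δ' hx hδ'0
          have hsplit : (∫ u in x..δ', (1 / f u - 1 / φ u))
              = (∫ u in x..δ', 1 / f u) - ∫ u in x..δ', 1 / φ u :=
            intervalIntegral.integral_sub (intf x δ' hx hδ'0) (intφ x δ' hx hδ'0)
          rw [hsplit]; linarith
        have e2 : |∫ u in x..δ', (1 / f u - 1 / φ u)|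
            ≤ ∫ u in x..δ', 2 * ε' * (1 / φ u) := by
          refine le_trans (intervalIntegral.abs_integral_le_integral_abs hxδ) ?_
          refine intervalIntegral.integral_mono_on hxδ
            ((intf x δ' hx hδ'0).sub (intφ x δ' hx hδ'0)).abs
            ((intφ x δ' hx hδ'0).const_mul (2 * ε')) ?_
          intro u hu
          exact hpt u (lt_of_lt_of_le hx hu.1) hu.2
        have e3 : (∫ u in x..δ', 2 * ε' * (1 / φ u)) = 2 * ε' * (Φ x - Φ δ') := by
          rw [intervalIntegral.integral_const_mul]
          have := Φadd x δ' hx hδ'0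
          rw [show (∫ u in x..δ', 1 / φ u) = Φ x - Φ δ' by linarith]
        have e4 : |F x - Φ x| ≤ |∫ u in x..δ', (1 / f u - 1 / φ u)| + Cδ := by
          rw [e1]; exact abs_add_le _ _
        have hεbound : 2 * ε' ≤ ε / 3 := by linarith
        nlinarith [mul_nonneg (show (0:ℝ) ≤ ε/3 - 2*ε' by linarith) hΦx.le,
          mul_nonneg (by positivity : (0:ℝ) ≤ 2*ε') hΦδ']
      have hΦposev : ∀ᶠ x in 𝓝[>] (0:ℝ), 0 < Φ x := Φtop.eventually_gt_atTop 0
      have hlim : Tendsto (fun x => (F x - Φ x) / Φ x + 1) (𝓝[>] (0:ℝ)) (𝓝 1) := by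
        have h := hdiff.add (tendsto_const_nhds : Tendsto (fun _ : ℝ => (1:ℝ)) (𝓝[>] (0:ℝ)) (𝓝 1))
        rw [zero_add] at h
        exact h
      refine hlim.congr' ?_
      filter_upwards [hΦposev] with x hx
      field_simp
      ring
  have goal1 : Tendsto (fun x => Φ x / F x) (𝓝[>] (0:ℝ)) (𝓝 1) := by
    have h := key.inv₀ one_ne_zero
    rw [inv_one] at h
    refine h.congr fun x => ?_
    rw [inv_div]
  -- Part 2: the gap lemma
  have gap : ∀ l : ℝ, 1 < l → ∃ c : ℝ, 0 < c ∧ c ≤ 1/2 ∧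
      ∀ᶠ x in 𝓝[>] (0:ℝ), Φ (l * x) ≤ (1 - c) * Φ x := by
      have h2β : (2:ℝ) < 2 ^ β := by
        calc (2:ℝ) = 2 ^ (1:ℝ) := (rpow_one 2).symm
        _ < 2 ^ β := by
            rw [Real.rpow_lt_rpow_left_iff (by norm_num : (1:ℝ) < 2)]; exact hβ
      obtain ⟨K, hKdef⟩ : ∃ K : ℝ, K = (2 + 2 ^ β) / 2 := ⟨_, rfl⟩
      have hK2 : (2:ℝ) < K := by rw [hKdef]; linarith
      have hKβ : K < 2 ^ β := by rw [hKdef]; linarith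
      obtain ⟨C, hCdef⟩ : ∃ C : ℝ, C = K / (K - 2) := ⟨_, rfl⟩
      have hCpos : 0 < C := by rw [hCdef]; exact div_pos (by linarith) (by linarith)
      have hC1 : 1 ≤ C := by
        rw [hCdef, le_div_iff₀ (by linarith)]; linarith
      have hCeq : 1 + 2 * C / K = C := by
        have hK0 : K ≠ 0 := by linarith
        have hK20 : K - 2 ≠ 0 := by linarith
        rw [hCdef]; field_simp; ring
      -- δ₁ region where φ(2x) ≥ K φ(x)
      have hev2 : ∀ᶠ x in 𝓝[>] (0:ℝ), K * φ x ≤ φ (2 * x) := by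
        have h := (hφrv 2 two_pos).eventually (eventually_gt_nhds hKβ)
        filter_upwards [h, eventually_mem_nhdsWithin] with x hx hx0
        have hφx := hφpos x hx0
        rw [lt_div_iff₀ hφx] at hx
        linarith
      obtain ⟨δ₁, hδ₁0, hδ₁⟩ : ∃ δ₁ > (0:ℝ), ∀ x ∈ Ioc (0:ℝ) δ₁, K * φ x ≤ φ (2 * x) := by
        obtain ⟨δ, h0, h⟩ := mem_nhdsGT_iff_exists_Ioc_subset.mp hev2
        exact ⟨δ, h0, fun x hx => h hx⟩
      -- Lemma A
      have lemA : ∀ n : ℕ, ∀ x : ℝ, 0 < x → x ≤ δ₁ → δ₁ ≤ 2 ^ n * x →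
          (∫ u in x..δ₁, 1 / φ u) ≤ C * (x / φ x) := by
        intro n
        induction n with
        | zero =>
          intro x hx hxδ hδx
          rw [pow_zero, one_mul] at hδx
          have hxe : x = δ₁ := le_antisymm hxδ hδx
          rw [hxe, intervalIntegral.integral_same]
          have := hφpos δ₁ hδ₁0
          positivity
        | succ n ih =>
          intro x hx hxδ hδx
          have hφx := hφpos x hx
          have hconst : ∀ b : ℝ, x ≤ b → b ≤ 2 * x → (∫ u in x..b, 1 / φ u) ≤ x / φ x := by
            intro b hxb hb2
            have hb0 : 0 < b := lt_of_lt_of_le hx hxb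
            have hmon : (∫ u in x..b, 1 / φ u) ≤ ∫ _ in x..b, 1 / φ x := by
              refine intervalIntegral.integral_mono_on hxb (intφ x b hx hb0)
                intervalIntegrable_const ?_
              intro u hu
              have hφu := hφpos u (lt_of_lt_of_le hx hu.1)
              exact one_div_le_one_div_of_le hφx (hφmono.monotone hu.1)
            rw [intervalIntegral.integral_const, smul_eq_mul] at hmon
            calc (∫ u in x..b, 1 / φ u) ≤ (b - x) * (1 / φ x) := hmon
            _ ≤ x * (1 / φ x) := by
                apply mul_le_mul_of_nonneg_right (by linarith) (by positivity)
            _ = x / φ x := by rw [mul_one_div]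
          by_cases hcase : δ₁ ≤ 2 * x
          · calc (∫ u in x..δ₁, 1 / φ u) ≤ x / φ x := hconst δ₁ hxδ hcase
            _ ≤ C * (x / φ x) := le_mul_of_one_le_left (by positivity) hC1
          · push_neg at hcase
            have h2x0 : 0 < 2 * x := by linarith
            have hsplit : (∫ u in x..2*x, 1 / φ u) + (∫ u in 2*x..δ₁, 1 / φ u)
                = ∫ u in x..δ₁, 1 / φ u :=
              intervalIntegral.integral_add_adjacent_intervals
                (intφ x (2*x) hx h2x0) (intφ (2*x) δ₁ h2x0 hδ₁0)
            have hfirst : (∫ u in x..2*x, 1 / φ u) ≤ x / φ x :=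
              hconst (2*x) (by linarith) (le_refl _)
            have hsecond : (∫ u in 2*x..δ₁, 1 / φ u) ≤ C * ((2*x) / φ (2*x)) := by
              apply ih (2*x) h2x0 hcase.le
              calc δ₁ ≤ 2 ^ (n+1) * x := hδx
              _ = 2 ^ n * (2 * x) := by ring
            have hKx : K * φ x ≤ φ (2 * x) := hδ₁ x ⟨hx, hxδ⟩
            have hφ2x : 0 < φ (2 * x) := hφpos _ h2x0
            have hKφ : 0 < K * φ x := by positivity
            have hstep : C * ((2*x) / φ (2*x)) ≤ C * ((2*x) / (K * φ x)) := by
              apply mul_le_mul_of_nonneg_left _ hCpos.le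
              apply div_le_div_of_nonneg_left (by linarith) hKφ hKx
            have heq : x / φ x + C * ((2*x) / (K * φ x)) = C * (x / φ x) := by
              have heq0 : x / φ x + C * ((2*x) / (K * φ x)) = (1 + 2*C/K) * (x / φ x) := by
                have hK0 : K ≠ 0 := by linarith
                field_simp
              rw [heq0, hCeq]
            linarith
      -- ψ := x/φ x tends to atTop and Φ x ≤ C ψ x + D
      obtain ⟨D, hDdef⟩ : ∃ D : ℝ, D = Φ δ₁ := ⟨_, rfl⟩
      have harch : ∀ x : ℝ, 0 < x → ∃ n : ℕ, δ₁ ≤ 2 ^ n * x := by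
        intro x hx
        obtain ⟨n, hn⟩ := pow_unbounded_of_one_lt (δ₁ / x) (by norm_num : (1:ℝ) < 2)
        refine ⟨n, ?_⟩
        rw [div_lt_iff₀ hx] at hn
        exact hn.le
      have hΦle : ∀ x : ℝ, 0 < x → x ≤ δ₁ → Φ x ≤ C * (x / φ x) + D := by
        intro x hx hxδ
        obtain ⟨n, hn⟩ := harch x hx
        have h1 := Φadd x δ₁ hx hδ₁0
        have h2 := lemA n x hx hxδ hn
        rw [hDdef]; linarith
      have hψtop : Tendsto (fun x => x / φ x) (𝓝[>] (0:ℝ)) atTop := by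
        have h1 : Tendsto (fun x => (Φ x + -D) / C) (𝓝[>] (0:ℝ)) atTop :=
          (tendsto_atTop_add_const_right _ (-D) Φtop).atTop_div_const hCpos
        refine tendsto_atTop_mono' _ ?_ h1
        filter_upwards [Ioo_mem_nhdsGT hδ₁0] with x hx
        show (Φ x + -D) / C ≤ x / φ x
        rw [div_le_iff₀ hCpos]
        have h2 := hΦle x hx.1 hx.2.le
        nlinarith
      have hΦle2 : ∀ᶠ x in 𝓝[>] (0:ℝ), Φ x ≤ 2 * C * (x / φ x) := by
        filter_upwards [Ioo_mem_nhdsGT hδ₁0,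
          hψtop.eventually_ge_atTop (D / C)] with x hx hψ
        have h1 := hΦle x hx.1 hx.2.le
        have h2 : D ≤ C * (x / φ x) := by
          rw [div_le_iff₀ hCpos] at hψ; nlinarith
        linarith
      -- the gap
      intro l hl
      have hl0 : (0:ℝ) < l := by linarith
      have hlβ : 0 < l ^ β := rpow_pos_of_pos hl0 β
      obtain ⟨c₀, hc₀def⟩ : ∃ c₀ : ℝ, c₀ = (l - 1) / (4 * C * l ^ β) := ⟨_, rfl⟩
      have hc₀pos : 0 < c₀ := by
        rw [hc₀def]; exact div_pos (by linarith) (by positivity)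
      refine ⟨min c₀ (1/2), lt_min hc₀pos one_half_pos, min_le_right _ _, ?_⟩
      have hevl : ∀ᶠ x in 𝓝[>] (0:ℝ), φ (l * x) ≤ 2 * l ^ β * φ x := by
        have h := (hφrv l hl0).eventually (eventually_lt_nhds
          (show l ^ β < 2 * l ^ β by linarith))
        filter_upwards [h, eventually_mem_nhdsWithin] with x hx hx0
        have hφx := hφpos x hx0
        rw [div_lt_iff₀ hφx] at hx
        linarith
      filter_upwards [hevl, hΦle2, Φtop.eventually_ge_atTop 0,
        eventually_mem_nhdsWithin] with x hφl hΦ2C hΦ0 hx0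
      have hx : (0:ℝ) < x := hx0
      have hφx := hφpos x hx
      have hlx0 : 0 < l * x := by positivity
      have hφlx := hφpos _ hlx0
      -- Φ x - Φ (l x) = ∫ x..lx ≥ (l-1) x / φ(lx)
      have hadd := Φadd x (l * x) hx hlx0
      have hlow : (l - 1) * x * (1 / φ (l * x)) ≤ ∫ u in x..l*x, 1 / φ u := by
        have hxlx : x ≤ l * x := by nlinarith
        have hmon : (∫ _ in x..l*x, 1 / φ (l * x)) ≤ ∫ u in x..l*x, 1 / φ u := by
          refine intervalIntegral.integral_mono_on hxlx intervalIntegrable_const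
            (intφ x (l*x) hx hlx0) ?_
          intro u hu
          have hu0 : 0 < u := lt_of_lt_of_le hx hu.1
          exact one_div_le_one_div_of_le (hφpos u hu0) (hφmono.monotone hu.2)
        rw [intervalIntegral.integral_const, smul_eq_mul] at hmon
        calc (l - 1) * x * (1 / φ (l * x)) = (l * x - x) * (1 / φ (l * x)) := by ring
        _ ≤ _ := hmon
      -- chain of bounds
      have hb1 : (l - 1) * x * (1 / φ (l * x)) ≥ (l - 1) * x / (2 * l ^ β * φ x) := by
        rw [ge_iff_le, mul_one_div, div_le_div_iff₀ (by positivity) hφlx]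
        have hnn : (0:ℝ) ≤ (l - 1) * x := by nlinarith
        nlinarith [mul_le_mul_of_nonneg_left hφl hnn]
      have hb2 : c₀ * Φ x ≤ (l - 1) * x / (2 * l ^ β * φ x) := by
        rw [hc₀def, div_mul_eq_mul_div, div_le_div_iff₀ (by positivity) (by positivity)]
        have h3 : Φ x * φ x ≤ 2 * C * x := by
          have h4 := mul_le_mul_of_nonneg_right hΦ2C hφx.le
          have h5 : 2 * C * (x / φ x) * φ x = 2 * C * x := by field_simp
          linarith
        have hkey : Φ x * (2 * l ^ β * φ x) ≤ (4 * C * l ^ β) * x := by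
          nlinarith [mul_le_mul_of_nonneg_right h3 (by positivity : (0:ℝ) ≤ 2 * l ^ β)]
        have hnn : (0:ℝ) ≤ l - 1 := by linarith
        calc (l - 1) * Φ x * (2 * l ^ β * φ x) = (l - 1) * (Φ x * (2 * l ^ β * φ x)) := by ring
        _ ≤ (l - 1) * ((4 * C * l ^ β) * x) := mul_le_mul_of_nonneg_left hkey hnn
        _ = (l - 1) * x * (4 * C * l ^ β) := by ring
      have hgoal : Φ (l * x) ≤ (1 - c₀) * Φ x := by linarith
      have hminle : min c₀ (1/2) ≤ c₀ := min_le_left _ _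
      nlinarith [mul_nonneg (sub_nonneg.mpr hminle) hΦ0]
  -- Part 2: endgame
  have goal2 : Tendsto (fun t => Φinv t / Finv t) atTop (𝓝 1) := by
    clear hΦinv hFinv
    have hΦinv := hΦinv'
    have hFinv := hFinv'
    have hFinvT : Tendsto Finv atTop (𝓝[>] (0:ℝ)) := by
      rw [tendsto_nhdsWithin_iff]; exact ⟨hFinv0, hFinv_pos⟩
    have hΦinvT : Tendsto Φinv atTop (𝓝[>] (0:ℝ)) := by
      rw [tendsto_nhdsWithin_iff]; exact ⟨hΦinv0, hΦinv_pos⟩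
    have hratio : Tendsto (fun t => Φ (Finv t) / Φ (Φinv t)) atTop (𝓝 1) := by
      have h1 : Tendsto (fun t => Φ (Finv t) / F (Finv t)) atTop (𝓝 1) :=
        goal1.comp hFinvT
      refine Tendsto.congr' ?_ h1
      filter_upwards [hFinv, hΦinv] with t h2 h3
      rw [h2, h3]
    have hratio2 : Tendsto (fun t => Φ (Φinv t) / Φ (Finv t)) atTop (𝓝 1) := by
      have h := hratio.inv₀ one_ne_zero
      rw [inv_one] at h
      refine h.congr fun t => ?_
      rw [inv_div]
    have main : ∀ l : ℝ, 1 < l →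
        (∀ᶠ t in atTop, Φinv t ≤ l * Finv t) ∧ (∀ᶠ t in atTop, Finv t ≤ l * Φinv t) := by
      intro l hl
      obtain ⟨c, hc0, hc2, hgap⟩ := gap l hl
      have h1c : (0:ℝ) < 1 - c := by linarith
      have hinvgt : (1:ℝ) < (1 - c)⁻¹ := by
        rw [lt_inv_comm₀ one_pos h1c]; linarith
      constructor
      · have hgapF : ∀ᶠ t in atTop, Φ (l * Finv t) ≤ (1 - c) * Φ (Finv t) :=
          hFinvT.eventually hgap
        have hclose : ∀ᶠ t in atTop, Φ (Finv t) / Φ (Φinv t) < (1 - c)⁻¹ :=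
          hratio.eventually (eventually_lt_nhds hinvgt)
        filter_upwards [hgapF, hclose, hFinv_pos, hΦinv_pos, hΦinv,
          eventually_gt_atTop (0:ℝ)] with t hgapt hclt hFp hΦp hΦt ht0
        by_contra hcon
        push_neg at hcon
        have hmono : Φ (Φinv t) ≤ Φ (l * Finv t) :=
          Φanti (l * Finv t) (Φinv t) (by positivity) hcon.le
        have h5 : Φ (Φinv t) ≤ (1 - c) * Φ (Finv t) := le_trans hmono hgapt
        rw [hΦt] at h5
        have hΦF : 0 < Φ (Finv t) := by nlinarith
        have h6 : (1 - c)⁻¹ ≤ Φ (Finv t) / Φ (Φinv t) := by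
          rw [hΦt, le_div_iff₀ ht0, inv_mul_le_iff₀ h1c] at *
          nlinarith
        linarith
      · have hgapΦ : ∀ᶠ t in atTop, Φ (l * Φinv t) ≤ (1 - c) * Φ (Φinv t) :=
          hΦinvT.eventually hgap
        have hclose : ∀ᶠ t in atTop, Φ (Φinv t) / Φ (Finv t) < (1 - c)⁻¹ :=
          hratio2.eventually (eventually_lt_nhds hinvgt)
        have hΦFpos : ∀ᶠ t in atTop, 0 < Φ (Finv t) := by
          have h7 : ∀ᶠ t in atTop, (1:ℝ)/2 < Φ (Finv t) / Φ (Φinv t) :=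
            hratio.eventually (eventually_gt_nhds (by norm_num : (1:ℝ)/2 < 1))
          filter_upwards [h7, hΦinv, eventually_gt_atTop (0:ℝ)] with t h7t hΦt ht0
          rw [hΦt, lt_div_iff₀ ht0] at h7t
          nlinarith
        filter_upwards [hgapΦ, hclose, hFinv_pos, hΦinv_pos, hΦinv, hΦFpos,
          eventually_gt_atTop (0:ℝ)] with t hgapt hclt hFp hΦp hΦt hΦF ht0
        by_contra hcon
        push_neg at hcon
        have hmono : Φ (Finv t) ≤ Φ (l * Φinv t) :=
          Φanti (l * Φinv t) (Finv t) (by positivity) hcon.le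
        have h5 : Φ (Finv t) ≤ (1 - c) * Φ (Φinv t) := le_trans hmono hgapt
        have h6 : (1 - c)⁻¹ ≤ Φ (Φinv t) / Φ (Finv t) := by
          rw [le_div_iff₀ hΦF, inv_mul_le_iff₀ h1c]
          nlinarith
        linarith
    rw [Metric.tendsto_nhds]
    intro ε hε
    have hl : (1:ℝ) < 1 + ε/2 := by linarith
    obtain ⟨h1, h2⟩ := main (1 + ε/2) hl
    filter_upwards [h1, h2, hFinv_pos, hΦinv_pos] with t h1t h2t hFp hΦp
    rw [Real.dist_eq]
    have hr1 : Φinv t / Finv t ≤ 1 + ε/2 := by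
      rw [div_le_iff₀ hFp]; linarith
    have hr2 : 1 - ε/2 ≤ Φinv t / Finv t := by
      rw [le_div_iff₀ hFp]
      nlinarith
    rw [abs_lt]
    constructor <;> nlinarith
  constructor
  · have h := goal1
    rw [hΦdef, hFdef] at h
    exact h
  · exact goal2
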